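/- If Q is obtained from P by a sequence of (C,S)-solitaire moves, then Q ⊆ φ(P) and φ(Q) = φ(P); i.e., the solitaire process preserves the filling closure. -/

import Mathlib

open scoped symmDiff

/-- The left translate `gS` of a finite shape `S` in a group `G`. -/
def gset {G : Type*} [Group G] (g : G) (S : Finset G) : Set G :=
  (fun s => g * s) '' (S : Set G)

/-- A `(C,S)`-filling move: `P ⊊ Q`, some translate `gS` meets `P` in exactly
`|S| - 1` elements, and `Q = P ∪ gC`. -/
def FillMove {G : Type*} [Group G] (C S : Finset G) (P Q : Set G) : Prop :=
  P ⊂ Q ∧ ∃ g : G, (P ∩ gset g S).ncard = S.card - 1 ∧ Q = P ∪ gset g C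

/-- The `(C,S)`-filling closure: the union of all sets reachable from `P` by
finitely many filling moves. -/
def fillClosure {G : Type*} [Group G] (C S : Finset G) (P : Set G) : Set G :=
  {x | ∃ Q : Set G, Relation.ReflTransGen (FillMove C S) P Q ∧ x ∈ Q}

/-- A `(C,S)`-solitaire move: for some `g`, both `P` and `Q` meet `gS` in
exactly `|S| - 1` elements, and `P △ Q` is a 2-element subset of `gC`. -/
def SolMove {G : Type*} [Group G] (C S : Finset G) (P Q : Set G) : Prop :=
  ∃ g : G, (P ∩ gset g S).ncard = S.card - 1 ∧ (Q ∩ gset g S).ncard = S.card - 1 ∧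
    (P ∆ Q) ⊆ gset g C ∧ (P ∆ Q).ncard = 2


lemma gset_finite {G : Type*} [Group G] (g : G) (S : Finset G) : (gset g S).Finite :=
  S.finite_toSet.image _

lemma gset_ncard {G : Type*} [Group G] (g : G) (S : Finset G) : (gset g S).ncard = S.card := by
  rw [gset, Set.ncard_image_of_injective _ (mul_right_injective g), Set.ncard_coe_finset]

lemma gset_mono {G : Type*} [Group G] (g : G) {C S : Finset G} (h : C ⊆ S) :
    gset g C ⊆ gset g S := Set.image_mono (Finset.coe_subset.mpr h)

/-- Fill chains lift along inclusions. -/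
lemma fill_lift {G : Type*} [Group G] {C S : Finset G} (hCS : C ⊆ S) {P X P' : Set G}
    (hPP' : P ⊆ P') (h : Relation.ReflTransGen (FillMove C S) P X) :
    ∃ X', Relation.ReflTransGen (FillMove C S) P' X' ∧ X ⊆ X' := by
  induction h with
  | refl => exact ⟨P', .refl, hPP'⟩
  | tail h1 h2 ih =>
    obtain ⟨X', hX', hsub⟩ := ih
    obtain ⟨hss, g, hcard, rfl⟩ := h2
    by_cases hc : gset g C ⊆ X'
    · exact ⟨X', hX', Set.union_subset hsub hc⟩
    · obtain ⟨c, hcC, hcX'⟩ := Set.not_subset.mp hc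
      have hcS : c ∈ gset g S := gset_mono g hCS hcC
      have hfin : (gset g S).Finite := gset_finite g S
      have hle : S.card - 1 ≤ (X' ∩ gset g S).ncard := by
        rw [← hcard]
        exact Set.ncard_le_ncard (Set.inter_subset_inter_left _ hsub)
          (hfin.subset Set.inter_subset_right)
      have hlt : (X' ∩ gset g S).ncard < S.card := by
        rw [← gset_ncard g S]
        exact Set.ncard_lt_ncard
          ⟨Set.inter_subset_right, fun hcontra => hcX' (hcontra hcS).1⟩ hfin
      have hcard' : (X' ∩ gset g S).ncard = S.card - 1 := by omega
      have hfm : FillMove C S X' (X' ∪ gset g C) := by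
        refine ⟨?_, g, hcard', rfl⟩
        rw [Set.ssubset_def]
        exact ⟨Set.subset_union_left,
          fun hcontra => hcX' (hcontra (Set.mem_union_right _ hcC))⟩
      exact ⟨X' ∪ gset g C, hX'.tail hfm, Set.union_subset_union_left _ hsub⟩

lemma fillClosure_mono {G : Type*} [Group G] {C S : Finset G} (hCS : C ⊆ S) {P P' : Set G}
    (hPP' : P ⊆ P') : fillClosure C S P ⊆ fillClosure C S P' := by
  rintro x ⟨X, hX, hx⟩
  obtain ⟨X', hX', hsub⟩ := fill_lift hCS hPP' hX
  exact ⟨X', hX', hsub hx⟩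

lemma fillMove_closure_eq {G : Type*} [Group G] {C S : Finset G} (hCS : C ⊆ S) {P R : Set G}
    (h : FillMove C S P R) : fillClosure C S R = fillClosure C S P := by
  apply Set.Subset.antisymm
  · rintro x ⟨X, hX, hx⟩
    exact ⟨X, hX.head h, hx⟩
  · exact fillClosure_mono hCS h.1.subset

/-- In a solitaire move the symmetric difference has one element on each side. -/
lemma sol_diff_nonempty {G : Type*} [Group G] {S : Finset G} {g : G} {P Q : Set G}
    (hP : (P ∩ gset g S).ncard = S.card - 1) (hQ : (Q ∩ gset g S).ncard = S.card - 1)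
    (hsub : (P ∆ Q) ⊆ gset g S) (h2 : (P ∆ Q).ncard = 2) : (Q \ P).Nonempty := by
  by_contra hne
  rw [Set.not_nonempty_iff_eq_empty] at hne
  have hD : P ∆ Q = P \ Q := by
    rw [Set.symmDiff_def, hne, Set.union_empty]
  have hfin : (gset g S).Finite := gset_finite g S
  have hDsub : P ∆ Q ⊆ P ∩ gset g S := by
    intro x hx
    rw [hD] at hx
    exact ⟨hx.1, hsub (hD ▸ hx)⟩
  have hDcard : 2 ≤ (P ∩ gset g S).ncard := by
    rw [← h2]
    exact Set.ncard_le_ncard hDsub (hfin.subset Set.inter_subset_right)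
  have hQsub : Q ∩ gset g S ⊆ (P ∩ gset g S) \ (P ∆ Q) := by
    rintro x ⟨hxQ, hxS⟩
    have hxP : x ∈ P := by
      by_contra hxP
      have : x ∈ Q \ P := ⟨hxQ, hxP⟩
      rw [hne] at this
      exact this
    refine ⟨⟨hxP, hxS⟩, ?_⟩
    rw [hD]
    exact fun hx => hx.2 hxQ
  have hQle : (Q ∩ gset g S).ncard ≤ (P ∩ gset g S).ncard - (P ∆ Q).ncard := by
    have hfinPS : (P ∩ gset g S).Finite := hfin.subset Set.inter_subset_right
    rw [← Set.ncard_diff hDsub (hfinPS.subset hDsub)]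
    exact Set.ncard_le_ncard hQsub hfinPS.diff
  omega

lemma solMove_closure_eq {G : Type*} [Group G] {C S : Finset G} (hCS : C ⊆ S) {P Q : Set G}
    (h : SolMove C S P Q) : fillClosure C S Q = fillClosure C S P := by
  obtain ⟨g, hP, hQ, hsub, h2⟩ := h
  have hsubS : (P ∆ Q) ⊆ gset g S := hsub.trans (gset_mono g hCS)
  have hQP : (Q \ P).Nonempty := sol_diff_nonempty hP hQ hsubS h2
  have hPQ : (P \ Q).Nonempty := by
    refine sol_diff_nonempty hQ hP ?_ ?_
    · rwa [symmDiff_comm]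
    · rwa [symmDiff_comm]
  have hRR : P ∪ gset g C = Q ∪ gset g C := by
    ext x
    constructor
    · rintro (hx | hx)
      · by_cases hq : x ∈ Q
        · exact Or.inl hq
        · exact Or.inr (hsub (Set.mem_symmDiff.mpr (Or.inl ⟨hx, hq⟩)))
      · exact Or.inr hx
    · rintro (hx | hx)
      · by_cases hp : x ∈ P
        · exact Or.inl hp
        · exact Or.inr (hsub (Set.mem_symmDiff.mpr (Or.inr ⟨hx, hp⟩)))
      · exact Or.inr hx
  obtain ⟨b, hbQ, hbP⟩ := hQP
  obtain ⟨a, haP, haQ⟩ := hPQ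
  have hbC : b ∈ gset g C := hsub (Set.mem_symmDiff.mpr (Or.inr ⟨hbQ, hbP⟩))
  have haC : a ∈ gset g C := hsub (Set.mem_symmDiff.mpr (Or.inl ⟨haP, haQ⟩))
  have hfmP : FillMove C S P (P ∪ gset g C) := by
    refine ⟨?_, g, hP, rfl⟩
    rw [Set.ssubset_def]
    exact ⟨Set.subset_union_left, fun hc => hbP (hc (Set.mem_union_right _ hbC))⟩
  have hfmQ : FillMove C S Q (P ∪ gset g C) := by
    refine ⟨?_, g, hQ, hRR.symm ▸ rfl⟩
    rw [hRR, Set.ssubset_def]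
    exact ⟨Set.subset_union_left, fun hc => haQ (hc (Set.mem_union_right _ haC))⟩
  rw [← fillMove_closure_eq hCS hfmP, ← fillMove_closure_eq hCS hfmQ]

lemma subset_fillClosure {G : Type*} [Group G] (C S : Finset G) (P : Set G) :
    P ⊆ fillClosure C S P := fun x hx => ⟨P, .refl, hx⟩

/-- The solitaire process preserves the filling closure: if `Q` is reachable from
`P` by solitaire moves, then `Q ⊆ φ(P)` and `φ(Q) = φ(P)`. -/
theorem solitaire_preserves_fillClosure {G : Type*} [Group G] (C S : Finset G)
    (hCS : C ⊆ S) (P Q : Set G)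
    (h : Relation.ReflTransGen (SolMove C S) P Q) :
    Q ⊆ fillClosure C S P ∧ fillClosure C S Q = fillClosure C S P := by
  induction h with
  | refl => exact ⟨subset_fillClosure C S P, rfl⟩
  | tail h1 h2 ih =>
    have heq := (solMove_closure_eq hCS h2).trans ih.2
    exact ⟨heq ▸ subset_fillClosure C S _, heq⟩
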